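/- Fix 1 ≤ i ≤ N−1 and 1 ≤ j ≤ T and regard d_{i,j} as a function of the time-t_j variables H_i(t_j), H_{i+1}(t_j), Q_i(t_j), with the time-t_{j−1} values held fixed and satisfying H_i(t_{j−1}) + H_{i+1}(t_{j−1}) > 2H_b. Then: (1) ∂d_{i,j}/∂H_{i+1}(t_j) = (g/Δx)(θ w (H_{i+1}(t_j) − H_b) + (1−θ)Ā); (2) ∂d_{i,j}/∂H_i(t_j) = −(g/Δx)(θ w (H_i(t_j) − H_b) + (1−θ)Ā); (3) ∂d_{i,j}/∂Q_i(t_j) = 1/Δt + (g/C²)(θ P_{i+1/2}(t_{j−1})(Q_i(t_j)² + ⟨Q_i(t_j)⟩²)/(A_{i+1/2}(t_{j−1})² ⟨Q_i(t_j)⟩) + (1−θ) P̄⟨Q̄⟩/Ā²), and this quantity is strictly positive; (4) if moreover H_{i+1}(t_j) > H_b, then ∂d_{i,j}/∂H_{i+1}(t_j) > 0. -/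

import Mathlib

/-- Smooth absolute value `⟨x⟩ = √(x² + ε)`. -/
noncomputable def sabs (ε x : ℝ) : ℝ := Real.sqrt (x ^ 2 + ε)

/-- The momentum residual `d_{i,j}` regarded as a function of the time-`t_j` variables
`H_i(t_j) = Hi`, `H_{i+1}(t_j) = Hip1`, `Q_i(t_j) = Qi`, with the time-`t_{j-1}` values
`Hiprev = H_i(t_{j-1})`, `Hip1prev = H_{i+1}(t_{j-1})`, `Qiprev = Q_i(t_{j-1})` held fixed.
Here `A_{i+1/2} = (w/2)(H_i + H_{i+1} - 2 H_b)` and `P_{i+1/2} = w + H_i + H_{i+1} - 2 H_b`. -/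
noncomputable def momResLocal (g w Hb Δx Δt C ε Abar Pbar Qbar θ : ℝ)
    (Hiprev Hip1prev Qiprev : ℝ) (Hi Hip1 Qi : ℝ) : ℝ :=
  (Qi - Qiprev) / Δt
    + g * (θ * (w / 2 * (Hi + Hip1 - 2 * Hb)) + (1 - θ) * Abar) * (Hip1 - Hi) / Δx
    + g * (θ * (w + Hiprev + Hip1prev - 2 * Hb) * sabs ε Qi
            / (w / 2 * (Hiprev + Hip1prev - 2 * Hb)) ^ 2
          + (1 - θ) * Pbar * sabs ε Qbar / Abar ^ 2) * Qi / C ^ 2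

private lemma momRes_key (g C P Ap s c2 Qi dt : ℝ) (hs : s ≠ 0) (hAp : Ap ≠ 0)
    (hC : C ≠ 0) :
    1 / dt + g / C ^ 2 * (P * (Qi ^ 2 + s ^ 2) / (Ap ^ 2 * s) + c2)
      = 1 / dt + 0 + (g * (P * (Qi / s) / Ap ^ 2) * Qi + g * (P * s / Ap ^ 2 + c2) * 1) / C ^ 2 := by
  field_simp
  ring

/-- Partial derivatives of the momentum residual `d_{i,j}` with respect to the current-time
variables `H_{i+1}(t_j)`, `H_i(t_j)`, `Q_i(t_j)`:
(1) `∂d/∂H_{i+1} = (g/Δx)(θ w (H_{i+1} - H_b) + (1-θ)Ā)`;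
(2) `∂d/∂H_i = -(g/Δx)(θ w (H_i - H_b) + (1-θ)Ā)`;
(3) `∂d/∂Q_i = 1/Δt + (g/C²)(θ P_prev (Q_i² + ⟨Q_i⟩²)/(A_prev² ⟨Q_i⟩) + (1-θ) P̄⟨Q̄⟩/Ā²) > 0`;
(4) if `H_{i+1} > H_b` then `∂d/∂H_{i+1} > 0`. -/
theorem momResLocal_partials (g w Hb Δx Δt C ε Abar Pbar Qbar θ : ℝ)
    (hg : 0 < g) (hw : 0 < w) (hΔx : 0 < Δx) (hΔt : 0 < Δt) (hC : 0 < C)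
    (hε : 0 < ε) (hAbar : 0 < Abar) (hPbar : 0 < Pbar)
    (hθ : θ ∈ Set.Icc (0 : ℝ) 1)
    (Hiprev Hip1prev Qiprev : ℝ) (hprev : 2 * Hb < Hiprev + Hip1prev)
    (Hi Hip1 Qi : ℝ) :
    HasDerivAt
        (fun y => momResLocal g w Hb Δx Δt C ε Abar Pbar Qbar θ Hiprev Hip1prev Qiprev Hi y Qi)
        (g / Δx * (θ * w * (Hip1 - Hb) + (1 - θ) * Abar)) Hip1
    ∧ HasDerivAt
        (fun y => momResLocal g w Hb Δx Δt C ε Abar Pbar Qbar θ Hiprev Hip1prev Qiprev y Hip1 Qi)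
        (-(g / Δx * (θ * w * (Hi - Hb) + (1 - θ) * Abar))) Hi
    ∧ (HasDerivAt
        (fun y => momResLocal g w Hb Δx Δt C ε Abar Pbar Qbar θ Hiprev Hip1prev Qiprev Hi Hip1 y)
        (1 / Δt + g / C ^ 2 *
          (θ * (w + Hiprev + Hip1prev - 2 * Hb) * (Qi ^ 2 + sabs ε Qi ^ 2)
              / ((w / 2 * (Hiprev + Hip1prev - 2 * Hb)) ^ 2 * sabs ε Qi)
            + (1 - θ) * Pbar * sabs ε Qbar / Abar ^ 2)) Qi
      ∧ 0 < 1 / Δt + g / C ^ 2 *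
          (θ * (w + Hiprev + Hip1prev - 2 * Hb) * (Qi ^ 2 + sabs ε Qi ^ 2)
              / ((w / 2 * (Hiprev + Hip1prev - 2 * Hb)) ^ 2 * sabs ε Qi)
            + (1 - θ) * Pbar * sabs ε Qbar / Abar ^ 2))
    ∧ (Hb < Hip1 → 0 < g / Δx * (θ * w * (Hip1 - Hb) + (1 - θ) * Abar)) := by
  have hApos : 0 < w / 2 * (Hiprev + Hip1prev - 2 * Hb) := by
    have : 0 < Hiprev + Hip1prev - 2 * Hb := by linarith
    positivity
  have hspos : 0 < sabs ε Qi := Real.sqrt_pos.2 (by positivity)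
  have hsQpos : 0 ≤ sabs ε Qbar := Real.sqrt_nonneg _
  have hPpos : 0 < w + Hiprev + Hip1prev - 2 * Hb := by linarith
  refine ⟨?_, ?_, ⟨?_, ?_⟩, ?_⟩
  · -- ∂/∂Hip1
    have hA : HasDerivAt
        (fun y : ℝ => g * (θ * (w / 2 * (Hi + y - 2 * Hb)) + (1 - θ) * Abar))
        (g * (θ * (w / 2))) Hip1 := by
      have := (((((hasDerivAt_id Hip1).const_add Hi).sub_const (2 * Hb)).const_mul
        (w / 2)).const_mul θ).add_const ((1 - θ) * Abar) |>.const_mul g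
      simpa using this
    have hB : HasDerivAt (fun y : ℝ => y - Hi) 1 Hip1 := (hasDerivAt_id Hip1).sub_const Hi
    have h := (((hA.mul hB).div_const Δx).const_add
      ((Qi - Qiprev) / Δt)).add_const
      (g * (θ * (w + Hiprev + Hip1prev - 2 * Hb) * sabs ε Qi
            / (w / 2 * (Hiprev + Hip1prev - 2 * Hb)) ^ 2
          + (1 - θ) * Pbar * sabs ε Qbar / Abar ^ 2) * Qi / C ^ 2)
    unfold momResLocal
    refine h.congr_deriv ?_
    field_simp
    ring
  · -- ∂/∂Hi
    have hA : HasDerivAt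
        (fun y : ℝ => g * (θ * (w / 2 * (y + Hip1 - 2 * Hb)) + (1 - θ) * Abar))
        (g * (θ * (w / 2))) Hi := by
      have := (((((hasDerivAt_id Hi).add_const Hip1).sub_const (2 * Hb)).const_mul
        (w / 2)).const_mul θ).add_const ((1 - θ) * Abar) |>.const_mul g
      simpa using this
    have hB : HasDerivAt (fun y : ℝ => Hip1 - y) (-1) Hi := by
      simpa using (hasDerivAt_id Hi).const_sub Hip1
    have h := (((hA.mul hB).div_const Δx).const_add
      ((Qi - Qiprev) / Δt)).add_const
      (g * (θ * (w + Hiprev + Hip1prev - 2 * Hb) * sabs ε Qi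
            / (w / 2 * (Hiprev + Hip1prev - 2 * Hb)) ^ 2
          + (1 - θ) * Pbar * sabs ε Qbar / Abar ^ 2) * Qi / C ^ 2)
    unfold momResLocal
    refine h.congr_deriv ?_
    field_simp
    ring
  · -- ∂/∂Qi
    have hs : HasDerivAt (fun y : ℝ => sabs ε y) (Qi / sabs ε Qi) Qi := by
      have hu : HasDerivAt (fun y : ℝ => y ^ 2 + ε) (2 * Qi) Qi := by
        simpa using (hasDerivAt_pow 2 Qi).add_const ε
      have hx : Qi ^ 2 + ε ≠ 0 := by positivity
      have := (Real.hasDerivAt_sqrt hx).comp Qi hu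
      unfold sabs
      refine this.congr_deriv ?_
      field_simp [sabs]
    have hA : HasDerivAt
        (fun y : ℝ => θ * (w + Hiprev + Hip1prev - 2 * Hb) * sabs ε y
            / (w / 2 * (Hiprev + Hip1prev - 2 * Hb)) ^ 2
          + (1 - θ) * Pbar * sabs ε Qbar / Abar ^ 2)
        (θ * (w + Hiprev + Hip1prev - 2 * Hb) * (Qi / sabs ε Qi)
            / (w / 2 * (Hiprev + Hip1prev - 2 * Hb)) ^ 2) Qi := by
      exact ((hs.const_mul (θ * (w + Hiprev + Hip1prev - 2 * Hb))).div_const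
        ((w / 2 * (Hiprev + Hip1prev - 2 * Hb)) ^ 2)).add_const _
    have hB : HasDerivAt (fun y : ℝ => y) 1 Qi := hasDerivAt_id Qi
    have h := ((((hA.const_mul g).mul hB).div_const (C ^ 2)).const_add
      (0 : ℝ)).add_const (0 : ℝ)
    have h1 : HasDerivAt (fun y : ℝ => (y - Qiprev) / Δt) (1 / Δt) Qi := by
      simpa using ((hasDerivAt_id Qi).sub_const Qiprev).div_const Δt
    have h2 := (h1.add
      (hasDerivAt_const Qi
        (g * (θ * (w / 2 * (Hi + Hip1 - 2 * Hb)) + (1 - θ) * Abar) * (Hip1 - Hi) / Δx))).add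
      (((hA.const_mul g).mul hB).div_const (C ^ 2))
    unfold momResLocal
    refine h2.congr_deriv ?_
    exact (momRes_key g C (θ * (w + Hiprev + Hip1prev - 2 * Hb))
      (w / 2 * (Hiprev + Hip1prev - 2 * Hb)) (sabs ε Qi)
      ((1 - θ) * Pbar * sabs ε Qbar / Abar ^ 2) Qi Δt
      (ne_of_gt hspos) (ne_of_gt hApos) (ne_of_gt hC)).symm
  · -- positivity of ∂/∂Qi
    have t1 : 0 ≤ θ * (w + Hiprev + Hip1prev - 2 * Hb) * (Qi ^ 2 + sabs ε Qi ^ 2)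
        / ((w / 2 * (Hiprev + Hip1prev - 2 * Hb)) ^ 2 * sabs ε Qi) := by
      apply div_nonneg
      · exact mul_nonneg (mul_nonneg hθ.1 hPpos.le)
          (add_nonneg (sq_nonneg _) (sq_nonneg _))
      · exact (mul_pos (pow_pos hApos 2) hspos).le
    have t2 : 0 ≤ (1 - θ) * Pbar * sabs ε Qbar / Abar ^ 2 := by
      apply div_nonneg
      · exact mul_nonneg (mul_nonneg (by linarith [hθ.2]) hPbar.le) hsQpos
      · exact (pow_pos hAbar 2).le
    have hdt : (0:ℝ) < 1 / Δt := by positivity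
    have hgC : (0:ℝ) ≤ g / C ^ 2 := (div_pos hg (pow_pos hC 2)).le
    have := mul_nonneg hgC (add_nonneg t1 t2)
    linarith
  · -- part 4
    intro h
    rcases eq_or_lt_of_le hθ.1 with h0 | h0
    · have heq : θ * w * (Hip1 - Hb) + (1 - θ) * Abar = Abar := by rw [← h0]; ring
      rw [heq]
      exact mul_pos (div_pos hg hΔx) hAbar
    · exact mul_pos (div_pos hg hΔx)
        (add_pos_of_pos_of_nonneg (mul_pos (mul_pos h0 hw) (sub_pos.2 h))
          (mul_nonneg (by linarith [hθ.2]) hAbar.le))
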